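/- Let K ⊆ ℝ^n be a convex body with inradius r(K). Then every periodic billiard trajectory on K has length ≥ 4·r(K). -/

import Mathlib

open scoped RealInnerProductSpace Pointwise
open Metric

noncomputable section

/-- Euclidean space ℝ^n. -/
abbrev Euc (n : ℕ) := EuclideanSpace ℝ (Fin n)

/-- The image of a closed polygon with vertices `q 0, …, q (m-1)` (indices mod `m`):
the union of the segments `[q i, q (i+1)]`. -/
def polyImage {n m : ℕ} [NeZero m] (q : Fin m → Euc n) : Set (Euc n) :=
  ⋃ i : Fin m, segment ℝ (q i) (q (i + 1))

/-- The length of a closed polygon: `∑ i, ‖q (i+1) - q i‖`. -/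
noncomputable def polyLength {n m : ℕ} [NeZero m] (q : Fin m → Euc n) : ℝ :=
  ∑ i : Fin m, ‖q (i + 1) - q i‖

/-- A convex body: a compact convex set with nonempty interior. -/
def IsConvexBody {n : ℕ} (K : Set (Euc n)) : Prop :=
  IsCompact K ∧ Convex ℝ K ∧ (interior K).Nonempty

/-- A closed polygon belongs to `𝒫⁺(K)` if no translate of its image is contained
in the interior of `K`. -/
def InPPlus {n m : ℕ} [NeZero m] (K : Set (Euc n)) (q : Fin m → Euc n) : Prop :=
  ∀ x : Euc n, ¬ ((fun p => p + x) '' polyImage q ⊆ interior K)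

/-- Unit direction of the `i`-th edge of a closed polygon. -/
noncomputable def dir {n m : ℕ} [NeZero m] (q : Fin m → Euc n) (i : Fin m) : Euc n :=
  ‖q (i + 1) - q i‖⁻¹ • (q (i + 1) - q i)

/-- Outer normal `ν i = u (i-1) - u i` at the `i`-th vertex. -/
noncomputable def normalVec {n m : ℕ} [NeZero m] (q : Fin m → Euc n) (i : Fin m) : Euc n :=
  dir q (i - 1) - dir q i

/-- A periodic billiard trajectory on a convex body `K`. -/
def IsBilliard {n m : ℕ} [NeZero m] (K : Set (Euc n)) (q : Fin m → Euc n) : Prop :=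
  2 ≤ m ∧ (∀ i, q (i + 1) ≠ q i) ∧ (∀ i, q i ∈ K) ∧
    ∀ i, normalVec q i ≠ 0 ∧ ∀ x ∈ K, ⟪x - q i, normalVec q i⟫ ≤ 0

/-- The inradius of a convex body: the supremum of radii of closed balls contained in it. -/
noncomputable def inradius {n : ℕ} (K : Set (Euc n)) : ℝ :=
  sSup {r : ℝ | 0 ≤ r ∧ ∃ c : Euc n, Metric.closedBall c r ⊆ K}


open Fin.NatCast in
/-- Any closed polygon is contained in a closed ball of radius `polyLength q / 4`
(halving argument): there is a center `c` with all vertices within `L/4` of `c`. -/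
lemma exists_center {n m : ℕ} [NeZero m] (q : Fin m → Euc n) :
    ∃ c : Euc n, ∀ i : Fin m, ‖q i - c‖ ≤ polyLength q / 4 := by
  classical
  set q' : ℕ → Euc n := fun j => q (j : Fin m) with hq'
  set d : ℕ → ℝ := fun i => ‖q' (i + 1) - q' i‖ with hdd
  set s : ℕ → ℝ := fun k => ∑ i ∈ Finset.range k, d i with hss
  have hd : ∀ i, 0 ≤ d i := fun i => norm_nonneg _
  have hssucc : ∀ k, s (k + 1) = s k + d k := fun k => Finset.sum_range_succ d k
  have hchain : ∀ i j : ℕ, i ≤ j → ‖q' j - q' i‖ ≤ s j - s i := by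
    intro i j hij
    induction j, hij using Nat.le_induction with
    | base => simp
    | succ j hij ih =>
        have h1 : ‖q' (j + 1) - q' i‖ ≤ ‖q' (j + 1) - q' j‖ + ‖q' j - q' i‖ :=
          norm_sub_le_norm_sub_add_norm_sub _ _ _
        have h2 : ‖q' (j + 1) - q' j‖ = d j := rfl
        rw [hssucc j]
        linarith
  set L : ℝ := polyLength q with hLdef
  have hL0 : 0 ≤ L := Finset.sum_nonneg (fun _ _ => norm_nonneg _)
  have hLs : L = s m := by
    show polyLength q = ∑ i ∈ Finset.range m, d i
    rw [polyLength, ← Fin.sum_univ_eq_sum_range (fun j => d j) m]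
    apply Finset.sum_congr rfl
    intro i _
    show ‖q (i + 1) - q i‖ = ‖q' ((i : ℕ) + 1) - q' (i : ℕ)‖
    simp only [hq']
    congr 2 <;> push_cast <;> simp
  have hm1 : 1 ≤ m := Nat.one_le_iff_ne_zero.mpr (NeZero.ne m)
  -- find k with s k ≤ L/2 ≤ s (k+1)
  have hex : ∃ k, L / 2 ≤ s (k + 1) := by
    refine ⟨m - 1, ?_⟩
    have : m - 1 + 1 = m := Nat.succ_pred_eq_of_pos hm1
    rw [this, ← hLs]
    linarith
  set k := Nat.find hex with hkdef
  have hk1 : L / 2 ≤ s (k + 1) := Nat.find_spec hex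
  have hkm : k < m := by
    have h1 : k ≤ m - 1 := Nat.find_le (by
      have hmm : m - 1 + 1 = m := Nat.succ_pred_eq_of_pos hm1
      rw [hmm, ← hLs]; linarith)
    omega
  have hk0 : s k ≤ L / 2 := by
    rcases Nat.eq_zero_or_pos k with h | h
    · rw [h]; simp [hss]; linarith
    · have hmin := Nat.find_min hex (show k - 1 < Nat.find hex by
        rw [← hkdef]; exact Nat.sub_lt h Nat.one_pos)
      push_neg at hmin
      have hkk : k - 1 + 1 = k := Nat.succ_pred_eq_of_pos h
      rw [hkk] at hmin
      exact hmin.le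
  set t : ℝ := L / 2 - s k with htdef
  have ht0 : 0 ≤ t := by simp only [htdef]; linarith
  have ht1 : t ≤ d k := by have := hssucc k; simp only [htdef]; linarith
  set v : Euc n := q' (k + 1) - q' k with hvdef
  have hvd : ‖v‖ = d k := rfl
  set p : Euc n := q' k + (t / d k) • v with hpdef
  have hp1 : ‖p - q' k‖ ≤ t := by
    have : p - q' k = (t / d k) • v := by rw [hpdef]; abel
    rw [this, norm_smul, hvd]
    rcases eq_or_lt_of_le (hd k) with h | h
    · rw [← h, mul_zero]; exact ht0
    · rw [Real.norm_eq_abs, abs_of_nonneg (div_nonneg ht0 (hd k)),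
        div_mul_cancel₀ _ (ne_of_gt h)]
  have hp2 : ‖q' (k + 1) - p‖ ≤ d k - t := by
    have hv1 : q' (k + 1) - p = (1 - t / d k) • v := by
      rw [hpdef, hvdef]; module
    rw [hv1, norm_smul, hvd]
    rcases eq_or_lt_of_le (hd k) with h | h
    · rw [← h, mul_zero]
      have ht : t = 0 := le_antisymm (by rw [← h] at ht1; exact ht1) ht0
      rw [ht]; norm_num
    · have h1 : t / d k ≤ 1 := (div_le_one h).mpr ht1
      rw [Real.norm_eq_abs, abs_of_nonneg (by linarith)]
      have := ne_of_gt h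
      field_simp
      exact le_rfl
  refine ⟨(2 : ℝ)⁻¹ • (q' 0 + p), ?_⟩
  intro i
  have hj : (i : ℕ) < m := i.isLt
  have hqi : q i = q' (i : ℕ) := by simp [hq', Fin.cast_val_eq_self]
  have hkey : ‖q' (i : ℕ) - q' 0‖ + ‖q' (i : ℕ) - p‖ ≤ L / 2 := by
    rcases le_or_gt (i : ℕ) k with hik | hik
    · have a1 : ‖q' (i : ℕ) - q' 0‖ ≤ s (i : ℕ) := by
        have := hchain 0 (i : ℕ) (Nat.zero_le _)
        simpa [hss] using this
      have a2 : ‖q' (i : ℕ) - p‖ ≤ (s k - s (i : ℕ)) + t := by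
        have b1 : ‖q' (i : ℕ) - p‖ ≤ ‖q' (i : ℕ) - q' k‖ + ‖q' k - p‖ :=
          norm_sub_le_norm_sub_add_norm_sub _ _ _
        have b2 : ‖q' (i : ℕ) - q' k‖ ≤ s k - s (i : ℕ) := by
          rw [norm_sub_rev]; exact hchain _ _ hik
        have b3 : ‖q' k - p‖ ≤ t := by rw [norm_sub_rev]; exact hp1
        linarith
      simp only [htdef] at a2 ⊢
      linarith
    · have hq0m : q' m = q' 0 := by simp [hq']
      have a1 : ‖q' (i : ℕ) - q' 0‖ ≤ L - s (i : ℕ) := by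
        rw [← hq0m, norm_sub_rev, hLs]
        exact hchain _ _ hj.le
      have a2 : ‖q' (i : ℕ) - p‖ ≤ (s (i : ℕ) - s (k + 1)) + (d k - t) := by
        have b1 : ‖q' (i : ℕ) - p‖ ≤ ‖q' (i : ℕ) - q' (k + 1)‖ + ‖q' (k + 1) - p‖ :=
          norm_sub_le_norm_sub_add_norm_sub _ _ _
        have b2 : ‖q' (i : ℕ) - q' (k + 1)‖ ≤ s (i : ℕ) - s (k + 1) :=
          hchain _ _ hik
        linarith
      have := hssucc k
      simp only [htdef] at a2 ⊢
      linarith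
  have heq : q' (i : ℕ) - (2 : ℝ)⁻¹ • (q' 0 + p)
      = (2 : ℝ)⁻¹ • ((q' (i : ℕ) - q' 0) + (q' (i : ℕ) - p)) := by
    module
  rw [hqi, heq, norm_smul]
  have : ‖(q' (i : ℕ) - q' 0) + (q' (i : ℕ) - p)‖
      ≤ ‖q' (i : ℕ) - q' 0‖ + ‖q' (i : ℕ) - p‖ := norm_add_le _ _
  rw [Real.norm_eq_abs]
  have h2 : |(2 : ℝ)⁻¹| = (2:ℝ)⁻¹ := by norm_num
  rw [h2]
  nlinarith [hkey, this]

theorem stmt10 {n m : ℕ} [NeZero m] (K : Set (Euc n)) (hK : IsConvexBody K)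
    (q : Fin m → Euc n) (hq : IsBilliard K q) :
    4 * inradius K ≤ polyLength q := by
  classical
  have hL0 : 0 ≤ polyLength q := Finset.sum_nonneg (fun _ _ => norm_nonneg _)
  have key : ∀ ρ ∈ {r : ℝ | 0 ≤ r ∧ ∃ c : Euc n, Metric.closedBall c r ⊆ K},
      ρ ≤ polyLength q / 4 := by
    rintro ρ ⟨hρ0, c, hc⟩
    by_contra hcon
    push_neg at hcon
    obtain ⟨c₀, hc₀⟩ := exists_center q
    set x : Euc n := c - c₀ with hxdef
    have hρpos : 0 < ρ := lt_of_le_of_lt (by linarith) hcon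
    have hvert : ∀ i, q i + x ∈ interior K := by
      intro i
      have h1 : ‖(q i + x) - c‖ ≤ polyLength q / 4 := by
        have := hc₀ i
        have heq : (q i + x) - c = q i - c₀ := by rw [hxdef]; abel
        rw [heq]; exact this
      have h2 : q i + x ∈ ball c ρ := by
        rw [mem_ball, dist_eq_norm]
        exact lt_of_le_of_lt h1 hcon
      have h3 : ball c ρ ⊆ interior K := by
        rw [← interior_closedBall c (ne_of_gt hρpos)]
        exact interior_mono hc
      exact h3 h2
    obtain ⟨hm2, hne, hmem, hnorm⟩ := hq
    have hneg : ∀ i, ⟪x, normalVec q i⟫ < 0 := by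
      intro i
      obtain ⟨hν, hsupp⟩ := hnorm i
      have hint := hvert i
      rw [mem_interior_iff_mem_nhds, Metric.mem_nhds_iff] at hint
      obtain ⟨ε, hε, hball⟩ := hint
      have hνn : 0 < ‖normalVec q i‖ := norm_pos_iff.mpr hν
      set z : Euc n := (q i + x) + (ε / 2 / ‖normalVec q i‖) • normalVec q i with hzdef
      have hz : z ∈ K := by
        apply hball
        rw [mem_ball, dist_eq_norm]
        have : z - (q i + x) = (ε / 2 / ‖normalVec q i‖) • normalVec q i := by
          rw [hzdef]; abel
        rw [this, norm_smul, Real.norm_eq_abs,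
          abs_of_nonneg (div_nonneg (by linarith) hνn.le),
          div_mul_cancel₀ _ (ne_of_gt hνn)]
        linarith
      have hle := hsupp z hz
      have hz2 : z - q i = x + (ε / 2 / ‖normalVec q i‖) • normalVec q i := by
        rw [hzdef]; abel
      rw [hz2, inner_add_left, real_inner_smul_left, real_inner_self_eq_norm_sq] at hle
      have hpos : 0 < (ε / 2 / ‖normalVec q i‖) * ‖normalVec q i‖ ^ 2 := by
        apply mul_pos (div_pos (by linarith) hνn)
        positivity
      linarith
    have hsum0 : ∑ i : Fin m, normalVec q i = 0 := by
      simp only [normalVec]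
      rw [Finset.sum_sub_distrib]
      have : ∑ i : Fin m, dir q (i - 1) = ∑ i : Fin m, dir q i := by
        exact Fintype.sum_equiv (Equiv.subRight (1 : Fin m)) _ _ (fun i => rfl)
      rw [this, sub_self]
    have h1 : ∑ i : Fin m, ⟪x, normalVec q i⟫ < 0 := by
      have : (0:ℝ) < m := by positivity
      apply Finset.sum_neg (fun i _ => hneg i)
      exact Finset.univ_nonempty
    have h2 : ∑ i : Fin m, ⟪x, normalVec q i⟫ = ⟪x, ∑ i : Fin m, normalVec q i⟫ :=
      (inner_sum _ _ _).symm
    rw [h2, hsum0, inner_zero_right] at h1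
    exact lt_irrefl _ h1
  have := Real.sSup_le key (by linarith)
  rw [inradius]
  linarith
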